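/- Let $(a_p)$ satisfy the CCR with $N_+ = \sum_p a_p^\dagger a_p$, and let real coefficients $v_p = v_{-p} \geq 0$ satisfy $\frac{v_p^2}{p^2 + v_p} \leq \mu (p^2 + v_p)$ for all $p$ and some $0 < \mu < 1$. Then for every $\lambda > 0$, $$\frac{1}{2}\sum_{p} v_p (a_p^\dagger a_{-p}^\dagger + a_p a_{-p}) \geq -\left(\lambda + \frac{\mu}{4\lambda}\right) \sum_p (p^2 + v_p) a_p^\dagger a_p - \frac{1}{\lambda}\sum_p \frac{v_p^2}{p^2 + v_p}.$$ In particular, choosing $\lambda = \sqrt{\mu}/2$, the pairing term is bounded below by $-\sqrt{\mu}\, \mathbb{H}_0^{F} - C$ with $\sqrt{\mu} < 1$, where $\mathbb{H}_0^F = \sum_p (p^2+v_p) a_p^\dagger a_p$. -/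

import Mathlib

set_option maxHeartbeats 1000000

/-- Lower bound on the Bogoliubov pairing term: if `v_p = v_{-p} ≥ 0` satisfy
`v_p²/(p²+v_p) ≤ μ(p²+v_p)` for some `0 < μ < 1`, then for every `λ > 0`,
`½ ∑_p v_p (a_p† a_{-p}† + a_p a_{-p})
  ≥ -(λ + μ/(4λ)) ∑_p (p²+v_p) a_p† a_p - λ⁻¹ ∑_p v_p²/(p²+v_p)`
as quadratic forms. -/
theorem pairing_term_lower_bound
    {V : Type*} [NormedAddCommGroup V] [InnerProductSpace ℂ V]
    {ι : Type*} [Fintype ι] [DecidableEq ι] (neg : ι → ι) (hneg : ∀ p, neg (neg p) = p)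
    (a ad : ι → Module.End ℂ V)
    (hadj : ∀ p (x y : V), (inner ℂ (ad p x) y : ℂ) = inner ℂ x (a p y))
    (hccr : ∀ p q, a p * ad q - ad q * a p = if p = q then 1 else 0)
    (hcomm_a : ∀ p q, a p * a q = a q * a p)
    (psq : ι → ℝ) (hpsq : ∀ p, 0 < psq p) (hpsq_sym : ∀ p, psq (neg p) = psq p)
    (v : ι → ℝ) (hv_nn : ∀ p, 0 ≤ v p) (hv_sym : ∀ p, v (neg p) = v p)
    (μ : ℝ) (hμ0 : 0 < μ) (hμ1 : μ < 1)
    (hkey : ∀ p, (v p) ^ 2 / (psq p + v p) ≤ μ * (psq p + v p))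
    (l : ℝ) (hl : 0 < l) (Φ : V) :
    -((l + μ / (4 * l)) * ∑ p : ι, (psq p + v p) * ‖a p Φ‖ ^ 2)
        - (1 / l) * (∑ p : ι, (v p) ^ 2 / (psq p + v p)) * ‖Φ‖ ^ 2 ≤
      (inner ℂ Φ ((((1 : ℂ) / 2) •
        ∑ p : ι, (v p : ℂ) • (ad p * ad (neg p) + a p * a (neg p))) Φ) : ℂ).re := by
  classical
  -- adjoint relation in the other slot
  have hadj' : ∀ p (x y : V), (inner ℂ x (ad p y) : ℂ) = inner ℂ (a p x) y := by
    intro p x y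
    rw [← inner_conj_symm, hadj, inner_conj_symm]
  -- Re ⟪x,y⟫ ≥ -‖x‖‖y‖
  have hre : ∀ (x y : V), -(‖x‖ * ‖y‖) ≤ (inner ℂ x y : ℂ).re := by
    intro x y
    have h1 := norm_inner_le_norm (𝕜 := ℂ) x y
    have h2 := Complex.abs_re_le_norm (inner ℂ x y : ℂ)
    have h3 := neg_abs_le ((inner ℂ x y : ℂ)).re
    linarith
  set A : ι → ℝ := fun p => ‖a p Φ‖ with hA
  set X : ι → ℝ := fun p => ‖ad p Φ‖ with hX
  set N : ℝ := ‖Φ‖ with hNdef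
  -- ‖ad q Φ‖² = ‖a q Φ‖² + ‖Φ‖²
  have hXA : ∀ q, X q ^ 2 = A q ^ 2 + N ^ 2 := by
    intro q
    have hc := hccr q q
    rw [if_pos rfl] at hc
    have hc' : a q (ad q Φ) = ad q (a q Φ) + Φ := by
      have h2 := congrArg (fun f : Module.End ℂ V => f Φ) hc
      simp only [LinearMap.sub_apply, Module.End.mul_apply, Module.End.one_apply] at h2
      rw [sub_eq_iff_eq_add] at h2
      rw [h2]
      abel
    have key : (inner ℂ (ad q Φ) (ad q Φ) : ℂ) = inner ℂ (a q Φ) (a q Φ) + inner ℂ Φ Φ := by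
      calc (inner ℂ (ad q Φ) (ad q Φ) : ℂ) = inner ℂ Φ (a q (ad q Φ)) := hadj q Φ (ad q Φ)
        _ = inner ℂ Φ (ad q (a q Φ)) + inner ℂ Φ Φ := by rw [hc', inner_add_right]
        _ = inner ℂ (a q Φ) (a q Φ) + inner ℂ Φ Φ := by rw [hadj']
    have key' := congrArg Complex.re key
    rw [Complex.add_re] at key'
    have e1 : (inner ℂ (ad q Φ) (ad q Φ) : ℂ).re = ‖ad q Φ‖ ^ 2 := inner_self_eq_norm_sq (𝕜 := ℂ) _
    have e2 : (inner ℂ (a q Φ) (a q Φ) : ℂ).re = ‖a q Φ‖ ^ 2 := inner_self_eq_norm_sq (𝕜 := ℂ) _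
    have e3 : (inner ℂ Φ Φ : ℂ).re = ‖Φ‖ ^ 2 := inner_self_eq_norm_sq (𝕜 := ℂ) _
    show ‖ad q Φ‖ ^ 2 = ‖a q Φ‖ ^ 2 + ‖Φ‖ ^ 2
    linarith [key', e1, e2, e3]
  have hpv : ∀ p, 0 < psq p + v p := fun p => add_pos_of_pos_of_nonneg (hpsq p) (hv_nn p)
  set e : ι → ℝ := fun p => l * (psq p + v p) with hedef
  have he : ∀ p, 0 < e p := fun p => mul_pos hl (hpv p)
  set c : ι → ℝ := fun p => (v p) ^ 2 / (4 * e p) with hcdef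
  have hc4 : ∀ p, 4 * e p * c p = (v p) ^ 2 := by
    intro p
    have := (he p).ne'
    show 4 * e p * ((v p) ^ 2 / (4 * e p)) = (v p) ^ 2
    field_simp [hcdef]
  have hcnn : ∀ p, 0 ≤ c p := fun p => div_nonneg (sq_nonneg _) (by linarith [he p])
  set H : ι → ℝ := fun q => (e q / 2 + c q / 2) * A q ^ 2 + c q / 2 * N ^ 2 with hHdef
  have hesym : ∀ p, e (neg p) = e p := by
    intro p; simp only [hedef, hv_sym, hpsq_sym]
  have hcsym : ∀ p, c (neg p) = c p := by
    intro p; simp only [hcdef, hv_sym, hesym]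
  -- per-mode lower bound
  have hmain : ∀ p, -(H p + H (neg p)) ≤
      (1 / 2) * (v p * ((inner ℂ Φ (ad p (ad (neg p) Φ)) : ℂ).re
        + (inner ℂ Φ (a p (a (neg p) Φ)) : ℂ).re)) := by
    intro p
    have h1 : -(A p * X (neg p)) ≤ (inner ℂ Φ (ad p (ad (neg p) Φ)) : ℂ).re := by
      rw [hadj']; exact hre _ _
    have h2 : -(X p * A (neg p)) ≤ (inner ℂ Φ (a p (a (neg p) Φ)) : ℂ).re := by
      rw [← hadj]; exact hre _ _
    have hs1 := hXA p
    have hs2 := hXA (neg p)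
    have hvp := hv_nn p
    have hA1 : (0:ℝ) ≤ A p := norm_nonneg _
    have hA2 : (0:ℝ) ≤ A (neg p) := norm_nonneg _
    have hX1 : (0:ℝ) ≤ X p := norm_nonneg _
    have hX2 : (0:ℝ) ≤ X (neg p) := norm_nonneg _
    have hep := he p
    have hc1 := hc4 p
    have hen := hesym p
    have hcn := hcsym p
    -- AM-GM bounds
    have hc1X : 4 * e p * c p * X (neg p) ^ 2 = v p ^ 2 * X (neg p) ^ 2 := by rw [hc1]
    have hc1X' : 4 * e p * c p * X p ^ 2 = v p ^ 2 * X p ^ 2 := by rw [hc1]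
    have am1 : v p * (A p * X (neg p)) ≤ e p * A p ^ 2 + c p * X (neg p) ^ 2 := by
      nlinarith [sq_nonneg (2 * e p * A p - v p * X (neg p)), hc1X, hep,
        mul_pos hep hep]
    have am2 : v p * (X p * A (neg p)) ≤ e p * A (neg p) ^ 2 + c p * X p ^ 2 := by
      nlinarith [sq_nonneg (2 * e p * A (neg p) - v p * X p), hc1X', hep,
        mul_pos hep hep]
    have hb1 : -(v p * (A p * X (neg p))) ≤ v p * (inner ℂ Φ (ad p (ad (neg p) Φ)) : ℂ).re := by
      nlinarith [h1]
    have hb2 : -(v p * (X p * A (neg p))) ≤ v p * (inner ℂ Φ (a p (a (neg p) Φ)) : ℂ).re := by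
      nlinarith [h2]
    have hHp : H p = (e p / 2 + c p / 2) * A p ^ 2 + c p / 2 * N ^ 2 := rfl
    have hHn : H (neg p) = (e p / 2 + c p / 2) * A (neg p) ^ 2 + c p / 2 * N ^ 2 := by
      rw [hHdef]; simp only [hen, hcn]
    rw [hHp, hHn]
    nlinarith [am1, am2, hb1, hb2, hs1, hs2]
  -- rewrite the quadratic form value as a sum
  have hre_sum : (inner ℂ Φ ((((1 : ℂ) / 2) •
        ∑ p : ι, (v p : ℂ) • (ad p * ad (neg p) + a p * a (neg p))) Φ) : ℂ).re
      = ∑ p : ι, (1 / 2) * (v p * ((inner ℂ Φ (ad p (ad (neg p) Φ)) : ℂ).re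
        + (inner ℂ Φ (a p (a (neg p) Φ)) : ℂ).re)) := by
    rw [LinearMap.smul_apply, LinearMap.sum_apply, inner_smul_right]
    simp only [LinearMap.smul_apply, LinearMap.add_apply, Module.End.mul_apply,
      inner_sum, inner_smul_right, inner_add_right]
    rw [Finset.mul_sum, Complex.re_sum]
    refine Finset.sum_congr rfl fun p _ => ?_
    have hcast : (1 : ℂ) / 2 * ((v p : ℂ) *
        ((inner ℂ Φ (ad p (ad (neg p) Φ)) : ℂ) + (inner ℂ Φ (a p (a (neg p) Φ)) : ℂ)))
        = ((1 / 2 * v p : ℝ) : ℂ) *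
        ((inner ℂ Φ (ad p (ad (neg p) Φ)) : ℂ) + (inner ℂ Φ (a p (a (neg p) Φ)) : ℂ)) := by
      push_cast; ring
    rw [hcast, Complex.re_ofReal_mul, Complex.add_re]
    ring
  -- symmetry: ∑ H (neg p) = ∑ H p
  have hinv : Function.Involutive neg := hneg
  have hsym_sum : ∑ p : ι, H (neg p) = ∑ p : ι, H p :=
    Fintype.sum_bijective neg hinv.bijective _ _ (fun p => rfl)
  have hdouble : ∑ p : ι, -(H p + H (neg p)) = -(2 * ∑ p : ι, H p) := by
    calc ∑ p : ι, -(H p + H (neg p)) = -∑ p : ι, (H p + H (neg p)) :=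
          Finset.sum_neg_distrib _
      _ = -((∑ p : ι, H p) + ∑ p : ι, H (neg p)) := by rw [Finset.sum_add_distrib]
      _ = -(2 * ∑ p : ι, H p) := by rw [hsym_sum]; ring
  have step1 : -(2 * ∑ p : ι, H p) ≤ (inner ℂ Φ ((((1 : ℂ) / 2) •
        ∑ p : ι, (v p : ℂ) • (ad p * ad (neg p) + a p * a (neg p))) Φ) : ℂ).re := by
    rw [hre_sum, ← hdouble]
    exact Finset.sum_le_sum fun p _ => hmain p
  refine le_trans ?_ step1
  -- final comparison of the two real sums
  have hfin : ∀ p : ι, 2 * H p ≤ (l + μ / (4 * l)) * ((psq p + v p) * A p ^ 2)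
      + (1 / l) * ((v p) ^ 2 / (psq p + v p)) * N ^ 2 := by
    intro p
    set k : ℝ := (v p) ^ 2 / (psq p + v p) with hkdef
    have hpvne := (hpv p).ne'
    have hkp : k * (psq p + v p) = (v p) ^ 2 := by
      rw [hkdef]; field_simp
    have hknn : 0 ≤ k := div_nonneg (sq_nonneg _) (hpv p).le
    have hkle : k ≤ μ * (psq p + v p) := hkey p
    have hc1 := hc4 p
    have h4lc : 4 * l * c p = k := by
      have h : 4 * (l * (psq p + v p)) * c p = (v p) ^ 2 := hc1
      have h2 : (4 * l * c p) * (psq p + v p) = k * (psq p + v p) := by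
        rw [hkp]; linarith [h]
      exact mul_right_cancel₀ hpvne h2
    have hA1 : (0:ℝ) ≤ A p ^ 2 := sq_nonneg _
    have hN1 : (0:ℝ) ≤ N ^ 2 := sq_nonneg _
    have hcle : c p ≤ μ / (4 * l) * (psq p + v p) := by
      have h4l : (0:ℝ) < 4 * l := by linarith
      have hmm : 4 * l * (μ / (4 * l) * (psq p + v p)) = μ * (psq p + v p) := by
        field_simp
      nlinarith [h4lc, hkle]
    have hcN : c p ≤ (1 / l) * k := by
      have hll : l * ((1 / l) * k) = k := by field_simp
      nlinarith [h4lc, hknn]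
    have h2H : 2 * H p = e p * A p ^ 2 + c p * A p ^ 2 + c p * N ^ 2 := by
      have : H p = (e p / 2 + c p / 2) * A p ^ 2 + c p / 2 * N ^ 2 := rfl
      rw [this]; ring
    rw [h2H]
    have hterm1 : e p * A p ^ 2 = l * ((psq p + v p) * A p ^ 2) := by
      have : e p = l * (psq p + v p) := rfl
      rw [this]; ring
    have hterm2 : c p * A p ^ 2 ≤ μ / (4 * l) * ((psq p + v p) * A p ^ 2) :=
      by nlinarith [mul_le_mul_of_nonneg_right hcle hA1]
    have hterm3 : c p * N ^ 2 ≤ (1 / l) * k * N ^ 2 :=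
      mul_le_mul_of_nonneg_right hcN hN1
    rw [hkdef] at hterm3
    nlinarith [hterm2, hterm3]
  calc -((l + μ / (4 * l)) * ∑ p : ι, (psq p + v p) * A p ^ 2)
        - (1 / l) * (∑ p : ι, (v p) ^ 2 / (psq p + v p)) * N ^ 2
      = -∑ p : ι, ((l + μ / (4 * l)) * ((psq p + v p) * A p ^ 2)
          + (1 / l) * ((v p) ^ 2 / (psq p + v p)) * N ^ 2) := by
        rw [Finset.sum_add_distrib, ← Finset.mul_sum]
        rw [show (∑ p : ι, (1 / l) * ((v p) ^ 2 / (psq p + v p)) * N ^ 2)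
          = (1 / l) * (∑ p : ι, (v p) ^ 2 / (psq p + v p)) * N ^ 2 by
            rw [Finset.mul_sum, Finset.sum_mul]
            try exact Finset.sum_congr rfl fun p _ => by ring]
        ring
    _ ≤ -∑ p : ι, 2 * H p := by
        apply neg_le_neg
        exact Finset.sum_le_sum fun p _ => hfin p
    _ = -(2 * ∑ p : ι, H p) := by rw [← Finset.mul_sum]
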